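/- Let H be a real Hilbert space, C ⊆ H nonempty closed convex. Suppose each f_i (i = 1,…,N) satisfies (A1)–(A4), each A_i : C → H is α-inverse strongly monotone, each S_j : C → C (j = 1,…,M) is asymptotically nonexpansive with the same sequence {k_n} ⊆ [1,∞), k_n → 1, the parameters satisfy 0 < α_n < 1 with limsup α_n < 1 and 0 < d ≤ r_n ≤ e < 2α, and F = (∩_{i=1}^N GEP(f_i, A_i)) ∩ (∩_{j=1}^M F(S_j)) is nonempty and bounded with F ⊆ {v : ‖v‖ ≤ ω}. Let x_0 ∈ C, C_0 = C, and for n ≥ 0: y_n^i ∈ C satisfies f_i(y_n^i, y) + ⟨A_i x_n, y − y_n^i⟩ + (1/r_n)⟨y − y_n^i, y_n^i − x_n⟩ ≥ 0 for all y ∈ C; i_n maximizes ‖y_n^i − x_n‖ and ȳ_n = y_n^{i_n}; z_n^j = α_n x_n + (1−α_n) S_j^n ȳ_n; j_n maximizes ‖z_n^j − x_n‖ and z̄_n = z_n^{j_n}; C_{n+1} = {v ∈ C_n : ‖z̄_n − v‖² ≤ ‖x_n − v‖² + ε_n} with ε_n = (k_n² − 1)(‖x_n‖ + ω)²; x_{n+1}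 = P_{C_{n+1}} x_0. Then {x_n} converges strongly to P_F x_0. -/

import Mathlib

open scoped RealInnerProductSpace
open Filter Topology

section Aux
variable {H : Type*} [NormedAddCommGroup H] [InnerProductSpace ℝ H]

/-- convexity of the squared norm for a convex combination -/
lemma combo_norm_sq_le (p q : H) {a : ℝ} (h0 : 0 ≤ a) (h1 : a ≤ 1) :
    ‖a • p + (1 - a) • q‖ ^ 2 ≤ a * ‖p‖ ^ 2 + (1 - a) * ‖q‖ ^ 2 := by
  have h := norm_add_sq_real (a • p) ((1 - a) • q)
  have hi : ⟪a • p, (1 - a) • q⟫ = a * ((1 - a) * ⟪p, q⟫) := by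
    rw [real_inner_smul_left, real_inner_smul_right]
  have hcs : ⟪p, q⟫ ≤ ‖p‖ * ‖q‖ := real_inner_le_norm p q
  have hnp : ‖a • p‖ = a * ‖p‖ := by rw [norm_smul, Real.norm_eq_abs, abs_of_nonneg h0]
  have hnq : ‖(1 - a) • q‖ = (1 - a) * ‖q‖ := by
    rw [norm_smul, Real.norm_eq_abs, abs_of_nonneg (by linarith)]
  rw [h, hi, hnp, hnq]
  nlinarith [norm_nonneg p, norm_nonneg q, sq_nonneg (‖p‖ - ‖q‖),
    mul_nonneg h0 (by linarith : (0:ℝ) ≤ 1 - a)]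

/-- variational characterization of the metric projection onto a convex set -/
lemma isProjOn_inner_le {K : Set H} (hK : Convex ℝ K) {x p : H}
    (h : p ∈ K ∧ ∀ v ∈ K, ‖p - x‖ ≤ ‖v - x‖) {v : H} (hv : v ∈ K) :
    ⟪x - p, v - p⟫ ≤ 0 := by
  have key : ∀ t : ℝ, 0 < t → t ≤ 1 → 0 ≤ 2 * ⟪p - x, v - p⟫ + t * ‖v - p‖ ^ 2 := by
    intro t ht0 ht1
    have hq : p + t • (v - p) ∈ K := by
      have := hK h.1 hv (by linarith : (0:ℝ) ≤ 1 - t) ht0.le (by ring)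
      convert this using 1
      module
    have h2 := h.2 _ hq
    have hexp : ‖p + t • (v - p) - x‖ ^ 2
        = ‖p - x‖ ^ 2 + 2 * (t * ⟪p - x, v - p⟫) + t ^ 2 * ‖v - p‖ ^ 2 := by
      have h3 : p + t • (v - p) - x = (p - x) + t • (v - p) := by abel
      rw [h3, norm_add_sq_real, real_inner_smul_right, norm_smul, Real.norm_eq_abs,
        abs_of_nonneg ht0.le, mul_pow]
    have hsq : ‖p - x‖ ^ 2 ≤ ‖p + t • (v - p) - x‖ ^ 2 := by
      nlinarith [norm_nonneg (p - x), norm_nonneg (p + t • (v - p) - x)]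
    rw [hexp] at hsq
    nlinarith
  by_contra hcon
  push_neg at hcon
  set c : ℝ := ⟪x - p, v - p⟫ with hc
  have hpc : ⟪p - x, v - p⟫ = -c := by
    rw [hc, ← inner_neg_left]; congr 1; abel
  rcases le_or_gt (‖v - p‖ ^ 2) 0 with hn | hn
  · have := key 1 one_pos le_rfl
    rw [hpc] at this; nlinarith
  · have ht : 0 < min 1 (c / ‖v - p‖ ^ 2) := by positivity
    have := key _ ht (min_le_left _ _)
    rw [hpc] at this
    have hle : min 1 (c / ‖v - p‖ ^ 2) * ‖v - p‖ ^ 2 ≤ c := by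
      calc min 1 (c / ‖v - p‖ ^ 2) * ‖v - p‖ ^ 2
          ≤ (c / ‖v - p‖ ^ 2) * ‖v - p‖ ^ 2 :=
            mul_le_mul_of_nonneg_right (min_le_right _ _) hn.le
        _ = c := div_mul_cancel₀ c hn.ne'
    nlinarith

end Aux

/-- `p` is the metric projection of `x` onto `K`. -/
def IsProjOn {H : Type*} [NormedAddCommGroup H] (K : Set H) (x p : H) : Prop :=
  p ∈ K ∧ ∀ v ∈ K, ‖p - x‖ ≤ ‖v - x‖

set_option maxHeartbeats 1000000 in
/-- **Corollary 3.4.** Parallel hybrid algorithm for a finite family of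
generalized equilibrium problems and asymptotically nonexpansive mappings: `{xₙ}`
converges strongly to `P_F x₀`. -/
theorem corollary34_strong_convergence
    {H : Type*} [NormedAddCommGroup H] [InnerProductSpace ℝ H] [CompleteSpace H]
    (C : Set H) (hCne : C.Nonempty) (hCcl : IsClosed C) (hCcv : Convex ℝ C)
    (N M : ℕ) (hN : 0 < N) (hM : 0 < M)
    -- the bifunctions fᵢ satisfy (A1)-(A4)
    (f : Fin N → H → H → ℝ)
    (hfA1 : ∀ i, ∀ x ∈ C, f i x x = 0)
    (hfA2 : ∀ i, ∀ x ∈ C, ∀ y ∈ C, f i x y + f i y x ≤ 0)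
    (hfA3 : ∀ i, ∀ x ∈ C, ∀ y ∈ C, ∀ z ∈ C,
      Filter.limsup (fun t : ℝ => f i (t • z + (1 - t) • x) y) (nhdsWithin 0 (Set.Ioi 0))
        ≤ f i x y)
    (hfA4conv : ∀ i, ∀ x ∈ C, ConvexOn ℝ C (f i x))
    (hfA4lsc : ∀ i, ∀ x ∈ C, LowerSemicontinuousOn (f i x) C)
    -- the operators Aᵢ are α-inverse strongly monotone on C
    (A : Fin N → H → H) (α : ℝ) (hα : 0 < α)
    (hism : ∀ i, ∀ x ∈ C, ∀ y ∈ C, α * ‖A i x - A i y‖ ^ 2 ≤ ⟪A i x - A i y, x - y⟫)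
    -- the mappings Sⱼ : C → C are asymptotically nonexpansive with the same
    -- sequence {kₙ} ⊆ [1,∞), kₙ → 1
    (S : Fin M → H → H) (hS : ∀ j, Set.MapsTo (S j) C C)
    (k : ℕ → ℝ) (hk1 : ∀ n, 1 ≤ k n)
    (hklim : Filter.Tendsto k Filter.atTop (nhds 1))
    (hasym : ∀ j, ∀ n, 1 ≤ n → ∀ x ∈ C, ∀ y ∈ C,
      ‖(S j)^[n] x - (S j)^[n] y‖ ≤ k n * ‖x - y‖)
    -- the solution set F is nonempty and bounded by ω
    (F : Set H)
    (hF : F = {v ∈ C | ∀ i, ∀ y ∈ C, 0 ≤ f i v y + ⟪A i v, y - v⟫} ∩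
      {v | ∀ j, S j v = v})
    (hFne : F.Nonempty) (ω : ℝ) (hω : 0 < ω) (hFb : ∀ v ∈ F, ‖v‖ ≤ ω)
    -- control parameters
    (a : ℕ → ℝ) (ha0 : ∀ n, 0 < a n) (ha1 : ∀ n, a n < 1)
    (halimsup : Filter.limsup a Filter.atTop < 1)
    (r : ℕ → ℝ) (d e : ℝ) (hd : 0 < d) (he : e < 2 * α) (hr : ∀ n, d ≤ r n ∧ r n ≤ e)
    -- the iterates of Algorithm 1
    (x : ℕ → H) (y : ℕ → Fin N → H) (z : ℕ → Fin M → H)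
    (iN : ℕ → Fin N) (jM : ℕ → Fin M) (ybar zbar : ℕ → H) (Cset : ℕ → Set H)
    (hx0 : x 0 ∈ C) (hC0 : Cset 0 = C)
    -- (i) yₙⁱ solves the regularized generalized equilibrium problem
    (hy : ∀ n i, y n i ∈ C ∧ ∀ w ∈ C,
      0 ≤ f i (y n i) w + ⟪A i (x n), w - y n i⟫ +
        (1 / r n) * ⟪w - y n i, y n i - x n⟫)
    -- (ii) iₙ maximizes ‖yₙⁱ - xₙ‖ and ȳₙ = yₙ^{iₙ}
    (hiN : ∀ n i, ‖y n i - x n‖ ≤ ‖y n (iN n) - x n‖)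
    (hybar : ∀ n, ybar n = y n (iN n))
    -- (iii) zₙʲ = αₙ xₙ + (1-αₙ) Sⱼⁿ ȳₙ
    (hz : ∀ n j, z n j = a n • x n + (1 - a n) • (S j)^[n] (ybar n))
    -- (iv) jₙ maximizes ‖zₙʲ - xₙ‖ and z̄ₙ = zₙ^{jₙ}
    (hjM : ∀ n j, ‖z n j - x n‖ ≤ ‖z n (jM n) - x n‖)
    (hzbar : ∀ n, zbar n = z n (jM n))
    -- (v) Cₙ₊₁ = {v ∈ Cₙ : ‖z̄ₙ - v‖² ≤ ‖xₙ - v‖² + εₙ}, εₙ = (kₙ² - 1)(‖xₙ‖ + ω)²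
    (hCset : ∀ n, Cset (n + 1) =
      {v ∈ Cset n | ‖zbar n - v‖ ^ 2 ≤ ‖x n - v‖ ^ 2 + (k n ^ 2 - 1) * (‖x n‖ + ω) ^ 2})
    -- (vi) xₙ₊₁ = P_{Cₙ₊₁} x₀
    (hxproj : ∀ n, IsProjOn (Cset (n + 1)) (x 0) (x (n + 1))) :
    ∃ p, IsProjOn F (x 0) p ∧ Filter.Tendsto x Filter.atTop (nhds p) := by
  obtain ⟨u0, hu0F⟩ := hFne
  -- basic unfoldings of membership in F
  have hFmem : ∀ u ∈ F, u ∈ C ∧ (∀ i, ∀ w ∈ C, 0 ≤ f i u w + ⟪A i u, w - u⟫)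
      ∧ (∀ j, S j u = u) := by
    intro u hu; rw [hF] at hu; exact ⟨hu.1.1, hu.1.2, hu.2⟩
  have hyC : ∀ n i, y n i ∈ C := fun n i => (hy n i).1
  have hybarC : ∀ n, ybar n ∈ C := fun n => (hybar n) ▸ hyC n (iN n)
  have hr0 : ∀ n, 0 < r n := fun n => lt_of_lt_of_le hd (hr n).1
  have hde : d ≤ e := le_trans (hr 0).1 (hr 0).2
  -- Cset n ⊆ C, x n ∈ Cset n, closed and convex
  have hCsetC : ∀ n, Cset n ⊆ C := by
    intro n; induction n with
    | zero => rw [hC0]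
    | succ m ih => rw [hCset m]; exact fun v hv => ih hv.1
  have hxCset : ∀ n, x n ∈ Cset n := by
    intro n; cases n with
    | zero => rw [hC0]; exact hx0
    | succ m => exact (hxproj m).1
  have hxC : ∀ n, x n ∈ C := fun n => hCsetC n (hxCset n)
  have hCclcv : ∀ n, IsClosed (Cset n) ∧ Convex ℝ (Cset n) := by
    intro n; induction n with
    | zero => rw [hC0]; exact ⟨hCcl, hCcv⟩
    | succ m ih =>
      rw [hCset m]
      constructor
      · exact IsClosed.inter ih.1 (isClosed_le
          (by fun_prop : Continuous fun v : H => ‖zbar m - v‖ ^ 2)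
          (by fun_prop : Continuous fun v : H =>
            ‖x m - v‖ ^ 2 + (k m ^ 2 - 1) * (‖x m‖ + ω) ^ 2))
      · have hiff : ∀ v : H, (‖zbar m - v‖ ^ 2 ≤ ‖x m - v‖ ^ 2
            + (k m ^ 2 - 1) * (‖x m‖ + ω) ^ 2)
            ↔ ⟪x m - zbar m, v⟫ * 2 ≤ ‖x m‖ ^ 2 - ‖zbar m‖ ^ 2
              + (k m ^ 2 - 1) * (‖x m‖ + ω) ^ 2 := by
          intro v
          have e1 := norm_sub_sq_real (zbar m) v
          have e2 := norm_sub_sq_real (x m) v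
          have e3 : ⟪x m - zbar m, v⟫ = ⟪x m, v⟫ - ⟪zbar m, v⟫ := inner_sub_left _ _ _
          constructor <;> intro hh <;> nlinarith
        intro v1 hv1 v2 hv2 b c hb hc hbc
        refine ⟨ih.2 hv1.1 hv2.1 hb hc hbc, ?_⟩
        rw [hiff]
        have h1 := (hiff v1).1 hv1.2
        have h2 := (hiff v2).1 hv2.2
        have e4 : ⟪x m - zbar m, b • v1 + c • v2⟫
            = b * ⟪x m - zbar m, v1⟫ + c * ⟪x m - zbar m, v2⟫ := by
          rw [inner_add_right, real_inner_smul_right, real_inner_smul_right]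
        rw [e4]
        set K := ‖x m‖ ^ 2 - ‖zbar m‖ ^ 2 + (k m ^ 2 - 1) * (‖x m‖ + ω) ^ 2 with hK
        have h5 : b * K + c * K = K := by rw [← add_mul, hbc, one_mul]
        have h6 := add_le_add (mul_le_mul_of_nonneg_left h1 hb)
          (mul_le_mul_of_nonneg_left h2 hc)
        linarith
  -- iterates of S stay in C, fixed points stay fixed, asymptotic bound incl. n = 0
  have hSit : ∀ (j : Fin M) (n : ℕ), ∀ w ∈ C, (S j)^[n] w ∈ C := by
    intro j n; exact fun w hw => Set.MapsTo.iterate (hS j) n hw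
  have hSfix : ∀ u ∈ F, ∀ (j : Fin M) (n : ℕ), (S j)^[n] u = u := by
    intro u hu j n
    exact Function.iterate_fixed ((hFmem u hu).2.2 j) n
  have hSk : ∀ u ∈ F, ∀ (j : Fin M) (n : ℕ), ∀ w ∈ C,
      ‖(S j)^[n] w - u‖ ≤ k n * ‖w - u‖ := by
    intro u hu j n w hw
    cases n with
    | zero =>
      simp only [Function.iterate_zero, id]
      nlinarith [hk1 0, norm_nonneg (w - u)]
    | succ m =>
      have := hasym j (m+1) (Nat.succ_le_succ (Nat.zero_le m)) w hw u (hFmem u hu).1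
      rwa [hSfix u hu j (m+1)] at this
  -- the resolvent inequality
  have hres : ∀ u ∈ F, ∀ n i,
      ‖y n i - u‖ ^ 2 ≤ ‖x n - u‖ ^ 2
        - (‖x n - y n i‖ - r n * ‖A i (x n) - A i u‖) ^ 2
        - r n * (2 * α - r n) * ‖A i (x n) - A i u‖ ^ 2 := by
    intro u hu n i
    obtain ⟨huC, huG, -⟩ := hFmem u hu
    set Y := y n i with hYdef
    set D := A i (x n) - A i u with hDdef
    have hYC : Y ∈ C := hyC n i
    have h1 := (hy n i).2 u huC
    have h2 := huG i Y hYC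
    have h3 := hfA2 i Y hYC u huC
    have h5 : ⟪A i u, Y - u⟫ = -⟪A i u, u - Y⟫ := by
      rw [show Y - u = -(u - Y) by abel, inner_neg_right]
    have h6 : ⟪A i (x n), u - Y⟫ - ⟪A i u, u - Y⟫ = ⟪D, u - Y⟫ :=
      (inner_sub_left _ _ _).symm
    have h7 : 0 ≤ ⟪D, u - Y⟫ + (1 / r n) * ⟪u - Y, Y - x n⟫ := by
      rw [← h6]; linarith
    have hrne : r n ≠ 0 := (hr0 n).ne'
    have h8 : 0 ≤ r n * ⟪D, u - Y⟫ + ⟪u - Y, Y - x n⟫ := by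
      have hm := mul_le_mul_of_nonneg_left h7 (hr0 n).le
      have : r n * (⟪D, u - Y⟫ + (1 / r n) * ⟪u - Y, Y - x n⟫)
          = r n * ⟪D, u - Y⟫ + ⟪u - Y, Y - x n⟫ := by
        field_simp
      rw [this] at hm; linarith [hm]
    have hpol : ⟪u - Y, Y - x n⟫
        = (‖u - x n‖ ^ 2 - ‖u - Y‖ ^ 2 - ‖Y - x n‖ ^ 2) / 2 := by
      have hh := norm_add_sq_real (u - Y) (Y - x n)
      rw [show u - Y + (Y - x n) = u - x n by abel] at hh
      linarith
    have hsplit : ⟪D, u - Y⟫ = ⟪D, x n - Y⟫ - ⟪D, x n - u⟫ := by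
      rw [← inner_sub_right]; congr 1; abel
    have hism' : α * ‖D‖ ^ 2 ≤ ⟪D, x n - u⟫ := hism i (x n) (hxC n) u huC
    have hcs : ⟪D, x n - Y⟫ ≤ ‖D‖ * ‖x n - Y‖ := real_inner_le_norm _ _
    have hDb : ⟪D, u - Y⟫ ≤ ‖D‖ * ‖x n - Y‖ - α * ‖D‖ ^ 2 := by
      rw [hsplit]; linarith
    have h9 := mul_le_mul_of_nonneg_left hDb (hr0 n).le
    have hnrev1 : ‖u - x n‖ = ‖x n - u‖ := norm_sub_rev _ _
    have hnrev2 : ‖u - Y‖ = ‖Y - u‖ := norm_sub_rev _ _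
    have hnrev3 : ‖Y - x n‖ = ‖x n - Y‖ := norm_sub_rev _ _
    rw [hnrev1, hnrev2, hnrev3] at hpol
    nlinarith [h8, hpol, h9]
  have hres' : ∀ u ∈ F, ∀ n i, ‖y n i - u‖ ^ 2 ≤ ‖x n - u‖ ^ 2 := by
    intro u hu n i
    have h := hres u hu n i
    have h1 : 0 ≤ r n * (2 * α - r n) * ‖A i (x n) - A i u‖ ^ 2 := by
      have := hr0 n; have := (hr n).2
      have : (0:ℝ) ≤ r n * (2 * α - r n) := by nlinarith
      positivity
    nlinarith [sq_nonneg (‖x n - y n i‖ - r n * ‖A i (x n) - A i u‖)]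
  -- bound for the z iterates
  have hzb : ∀ u ∈ F, ∀ n j, ‖z n j - u‖ ^ 2
      ≤ a n * ‖x n - u‖ ^ 2 + (1 - a n) * (k n * ‖ybar n - u‖) ^ 2 := by
    intro u hu n j
    rw [hz n j]
    have hsplit : a n • x n + (1 - a n) • (S j)^[n] (ybar n) - u
        = a n • (x n - u) + (1 - a n) • ((S j)^[n] (ybar n) - u) := by module
    rw [hsplit]
    refine le_trans (combo_norm_sq_le _ _ (ha0 n).le (ha1 n).le) ?_
    have hk := hSk u hu j n (ybar n) (hybarC n)
    have h2 : ‖(S j)^[n] (ybar n) - u‖ ^ 2 ≤ (k n * ‖ybar n - u‖) ^ 2 :=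
      pow_le_pow_left₀ (norm_nonneg _) hk 2
    have h3 : (0:ℝ) ≤ 1 - a n := by linarith [ha1 n]
    nlinarith
  -- the key inequality: F ⊆ Cset n
  have hkey : ∀ u ∈ F, ∀ n, ‖zbar n - u‖ ^ 2
      ≤ ‖x n - u‖ ^ 2 + (k n ^ 2 - 1) * (‖x n‖ + ω) ^ 2 := by
    intro u hu n
    rw [hzbar n]
    have h1 := hzb u hu n (jM n)
    have h2 : ‖ybar n - u‖ ^ 2 ≤ ‖x n - u‖ ^ 2 := by
      rw [hybar n]; exact hres' u hu n (iN n)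
    have h3 : ‖x n - u‖ ≤ ‖x n‖ + ω := by
      calc ‖x n - u‖ ≤ ‖x n‖ + ‖u‖ := norm_sub_le _ _
        _ ≤ ‖x n‖ + ω := by linarith [hFb u hu]
    have h4 : ‖x n - u‖ ^ 2 ≤ (‖x n‖ + ω) ^ 2 :=
      pow_le_pow_left₀ (norm_nonneg _) h3 2
    have hk := hk1 n
    have hk2 : (1:ℝ) ≤ k n ^ 2 := by nlinarith
    have e1 : (0:ℝ) ≤ 1 - a n := by linarith [ha1 n]
    calc ‖z n (jM n) - u‖ ^ 2
        ≤ a n * ‖x n - u‖ ^ 2 + (1 - a n) * (k n * ‖ybar n - u‖) ^ 2 := h1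
      _ = a n * ‖x n - u‖ ^ 2 + (1 - a n) * (k n ^ 2 * ‖ybar n - u‖ ^ 2) := by ring
      _ ≤ a n * ‖x n - u‖ ^ 2 + (1 - a n) * (k n ^ 2 * ‖x n - u‖ ^ 2) := by
          have h5 := mul_le_mul_of_nonneg_left h2 (by positivity : (0:ℝ) ≤ k n ^ 2)
          have h6 := mul_le_mul_of_nonneg_left h5 e1
          linarith
      _ = ‖x n - u‖ ^ 2 + (k n ^ 2 - 1) * ‖x n - u‖ ^ 2
            - a n * ((k n ^ 2 - 1) * ‖x n - u‖ ^ 2) := by ring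
      _ ≤ ‖x n - u‖ ^ 2 + (k n ^ 2 - 1) * ‖x n - u‖ ^ 2 := by
          have h7 : 0 ≤ a n * ((k n ^ 2 - 1) * ‖x n - u‖ ^ 2) :=
            mul_nonneg (ha0 n).le (mul_nonneg (by linarith) (by positivity))
          linarith
      _ ≤ ‖x n - u‖ ^ 2 + (k n ^ 2 - 1) * (‖x n‖ + ω) ^ 2 := by
          have h8 := mul_le_mul_of_nonneg_left h4 (by linarith : (0:ℝ) ≤ k n ^ 2 - 1)
          linarith
  have hFsub : ∀ n, F ⊆ Cset n := by
    intro n; induction n with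
    | zero => rw [hC0]; exact fun u hu => (hFmem u hu).1
    | succ m ih =>
      rw [hCset m]; exact fun u hu => ⟨ih hu, hkey u hu m⟩
  -- monotonicity of Cset
  have hCstep : ∀ n, Cset (n+1) ⊆ Cset n := by
    intro n; rw [hCset n]; exact fun v hv => hv.1
  have hCmono : ∀ m n, n ≤ m → Cset m ⊆ Cset n := by
    intro m n h
    induction h with
    | refl => exact subset_rfl
    | step h ih => exact Set.Subset.trans (hCstep _) ih
  -- norm monotone and bounded
  have hLb : ∀ n, ‖x n - x 0‖ ≤ ‖u0 - x 0‖ := by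
    intro n; cases n with
    | zero => simp [norm_nonneg]
    | succ m => exact (hxproj m).2 u0 (hFsub (m+1) hu0F)
  have hLmono : Monotone fun n => ‖x n - x 0‖ := by
    apply monotone_nat_of_le_succ
    intro n
    cases n with
    | zero => simp
    | succ m => exact (hxproj m).2 _ (hCstep _ (hxproj (m+1)).1)
  -- the quadratic Cauchy estimate
  have hsq : ∀ n m, n ≤ m → ‖x m - x n‖ ^ 2 ≤ ‖x m - x 0‖ ^ 2 - ‖x n - x 0‖ ^ 2 := by
    intro n m h
    cases n with
    | zero => simp
    | succ n' =>
      have hxm : x m ∈ Cset (n'+1) := hCmono m (n'+1) h (hxCset m)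
      have hin := isProjOn_inner_le (hCclcv (n'+1)).2 (hxproj n') hxm
      have hexp := norm_add_sq_real (x m - x (n'+1)) (x (n'+1) - x 0)
      rw [show x m - x (n'+1) + (x (n'+1) - x 0) = x m - x 0 by abel] at hexp
      have hcomm : ⟪x m - x (n'+1), x (n'+1) - x 0⟫
          = -⟪x 0 - x (n'+1), x m - x (n'+1)⟫ := by
        rw [show x (n'+1) - x 0 = -(x 0 - x (n'+1)) by abel, inner_neg_right,
          real_inner_comm]
      rw [hcomm] at hexp
      nlinarith [sq_nonneg ‖x m - x (n'+1)‖]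
  have hcauchy : CauchySeq x := by
    have hmono2 : Monotone fun n => ‖x n - x 0‖ ^ 2 := fun m n h =>
      pow_le_pow_left₀ (norm_nonneg _) (hLmono h) 2
    have hbdd : BddAbove (Set.range fun n => ‖x n - x 0‖ ^ 2) := by
      refine ⟨‖u0 - x 0‖ ^ 2, ?_⟩
      rintro _ ⟨n, rfl⟩
      exact pow_le_pow_left₀ (norm_nonneg _) (hLb n) 2
    have hten := tendsto_atTop_ciSup hmono2 hbdd
    set ℓ := ⨆ n, ‖x n - x 0‖ ^ 2 with hℓ
    rw [Metric.cauchySeq_iff']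
    intro ε hε
    have hlt : ℓ - ε ^ 2 < ℓ := by nlinarith
    obtain ⟨NN, hNN⟩ := (hten.eventually (eventually_gt_nhds hlt)).exists
    refine ⟨NN, fun n hn => ?_⟩
    have h1 := hsq NN n hn
    have h2 : ‖x n - x 0‖ ^ 2 ≤ ℓ := le_ciSup hbdd n
    have h3 : ‖x n - x NN‖ ^ 2 < ε ^ 2 := by nlinarith
    rw [dist_eq_norm]
    nlinarith [norm_nonneg (x n - x NN)]
  obtain ⟨p, hxp⟩ := cauchySeq_tendsto_of_complete hcauchy
  have hpC : p ∈ C := hCcl.mem_of_tendsto hxp (Filter.Eventually.of_forall hxC)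
  -- epsilon goes to zero
  have hxb : ∀ n, ‖x n‖ ≤ ‖x 0‖ + ‖u0 - x 0‖ := by
    intro n
    calc ‖x n‖ = ‖(x n - x 0) + x 0‖ := by rw [show x n - x 0 + x 0 = x n from by abel]
      _ ≤ ‖x n - x 0‖ + ‖x 0‖ := norm_add_le _ _
      _ ≤ ‖x 0‖ + ‖u0 - x 0‖ := by linarith [hLb n]
  have heps : Filter.Tendsto (fun n => (k n ^ 2 - 1) * (‖x n‖ + ω) ^ 2)
      Filter.atTop (nhds 0) := by
    have hg : Filter.Tendsto (fun n => (k n ^ 2 - 1) * (‖x 0‖ + ‖u0 - x 0‖ + ω) ^ 2)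
        Filter.atTop (nhds 0) := by
      have h1 : Filter.Tendsto (fun n => k n ^ 2 - 1) Filter.atTop (nhds 0) := by
        have := ((hklim.pow 2).sub_const 1)
        norm_num at this
        exact this
      simpa using h1.mul_const ((‖x 0‖ + ‖u0 - x 0‖ + ω) ^ 2)
    apply squeeze_zero (fun n => ?_) (fun n => ?_) hg
    · have hk2 : (1:ℝ) ≤ k n ^ 2 := by nlinarith [hk1 n]
      exact mul_nonneg (by linarith) (by positivity)
    · have hk2 : (0:ℝ) ≤ k n ^ 2 - 1 := by nlinarith [hk1 n]
      have hb : (‖x n‖ + ω) ^ 2 ≤ (‖x 0‖ + ‖u0 - x 0‖ + ω) ^ 2 := by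
        apply pow_le_pow_left₀ (by positivity)
        linarith [hxb n]
      exact mul_le_mul_of_nonneg_left hb hk2
  -- zbar n - x n → 0
  have hxsucc : Filter.Tendsto (fun n => ‖x (n+1) - x n‖) Filter.atTop (nhds 0) := by
    have h1 : Filter.Tendsto (fun n => x (n+1) - x n) Filter.atTop (nhds (p - p)) :=
      (hxp.comp (tendsto_add_atTop_nat 1)).sub hxp
    rw [sub_self] at h1
    simpa using h1.norm
  have hzbx1 : Filter.Tendsto (fun n => ‖zbar n - x (n+1)‖) Filter.atTop (nhds 0) := by
    have hmem : ∀ n, ‖zbar n - x (n+1)‖ ^ 2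
        ≤ ‖x n - x (n+1)‖ ^ 2 + (k n ^ 2 - 1) * (‖x n‖ + ω) ^ 2 := by
      intro n
      have := (hxproj n).1
      rw [hCset n] at this
      exact this.2
    have hsq2 : Filter.Tendsto (fun n => ‖zbar n - x (n+1)‖ ^ 2) Filter.atTop (nhds 0) := by
      apply squeeze_zero (fun n => by positivity) hmem
      have h2 : Filter.Tendsto (fun n => ‖x n - x (n+1)‖ ^ 2) Filter.atTop (nhds 0) := by
        have : Filter.Tendsto (fun n => ‖x (n+1) - x n‖ ^ 2) Filter.atTop (nhds 0) := by
          simpa using hxsucc.pow 2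
        refine this.congr fun n => ?_
        rw [norm_sub_rev]
      simpa using h2.add heps
    have := (Real.continuous_sqrt.tendsto 0).comp hsq2
    rw [Real.sqrt_zero] at this
    refine this.congr fun n => ?_
    simp [Real.sqrt_sq (norm_nonneg _)]
  have hzbx : Filter.Tendsto (fun n => ‖zbar n - x n‖) Filter.atTop (nhds 0) := by
    apply squeeze_zero (fun n => norm_nonneg _) (fun n => ?_) (by simpa using hzbx1.add hxsucc)
    calc ‖zbar n - x n‖ ≤ ‖zbar n - x (n+1)‖ + ‖x (n+1) - x n‖ := by
          rw [show zbar n - x n = (zbar n - x (n+1)) + (x (n+1) - x n) by abel]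
          exact norm_add_le _ _
      _ = ‖zbar n - x (n+1)‖ + ‖x (n+1) - x n‖ := rfl
  have hzbp : Filter.Tendsto zbar Filter.atTop (nhds p) := by
    rw [tendsto_iff_norm_sub_tendsto_zero]
    apply squeeze_zero (fun n => norm_nonneg _) (fun n => ?_)
      (by simpa using hzbx.add (tendsto_iff_norm_sub_tendsto_zero.mp hxp))
    calc ‖zbar n - p‖ ≤ ‖zbar n - x n‖ + ‖x n - p‖ := by
          rw [show zbar n - p = (zbar n - x n) + (x n - p) by abel]
          exact norm_add_le _ _
      _ = ‖zbar n - x n‖ + ‖x n - p‖ := rfl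
  -- eventual bound on a n
  obtain ⟨q, hq1, hqa⟩ : ∃ q, q < 1 ∧ ∀ᶠ n in Filter.atTop, a n ≤ q := by
    refine ⟨(Filter.limsup a Filter.atTop + 1) / 2, by linarith, ?_⟩
    have hbd : Filter.IsBoundedUnder (· ≤ ·) Filter.atTop a :=
      ⟨1, Filter.eventually_map.2 (Filter.Eventually.of_forall fun n => (ha1 n).le)⟩
    have := Filter.eventually_lt_of_limsup_lt
      (by linarith : Filter.limsup a Filter.atTop < (Filter.limsup a Filter.atTop + 1) / 2) hbd
    exact this.mono fun n h => h.le
  have hq0 : 0 < 1 - q := by linarith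
  -- S_j^n ybar n → p
  have hSybar : ∀ j, Filter.Tendsto (fun n => (S j)^[n] (ybar n)) Filter.atTop (nhds p) := by
    intro j
    have hzj : ∀ n, z n j - x n = (1 - a n) • ((S j)^[n] (ybar n) - x n) := by
      intro n; rw [hz n j]; module
    have hnormz : ∀ n, ‖z n j - x n‖ = (1 - a n) * ‖(S j)^[n] (ybar n) - x n‖ := by
      intro n
      rw [hzj n, norm_smul, Real.norm_eq_abs, abs_of_nonneg (by linarith [ha1 n])]
    have hTx : Filter.Tendsto (fun n => ‖(S j)^[n] (ybar n) - x n‖) Filter.atTop (nhds 0) := by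
      apply squeeze_zero' (Filter.Eventually.of_forall fun n => norm_nonneg _)
        (g := fun n => (1 / (1 - q)) * ‖zbar n - x n‖) ?_ (by simpa using hzbx.const_mul (1/(1-q)))
      filter_upwards [hqa] with n hn
      have h1 : ‖z n j - x n‖ ≤ ‖zbar n - x n‖ := by rw [hzbar n]; exact hjM n j
      have h2 := hnormz n
      have h3 : (0:ℝ) ≤ ‖(S j)^[n] (ybar n) - x n‖ := norm_nonneg _
      have h4 : (1 - q) * ‖(S j)^[n] (ybar n) - x n‖
          ≤ (1 - a n) * ‖(S j)^[n] (ybar n) - x n‖ :=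
        mul_le_mul_of_nonneg_right (by linarith) h3
      rw [div_mul_eq_mul_div, le_div_iff₀ hq0, one_mul]
      calc ‖(S j)^[n] (ybar n) - x n‖ * (1 - q)
          = (1 - q) * ‖(S j)^[n] (ybar n) - x n‖ := by ring
        _ ≤ (1 - a n) * ‖(S j)^[n] (ybar n) - x n‖ := h4
        _ = ‖z n j - x n‖ := h2.symm
        _ ≤ ‖zbar n - x n‖ := h1
    rw [tendsto_iff_norm_sub_tendsto_zero]
    apply squeeze_zero (fun n => norm_nonneg _) (fun n => ?_)
      (by simpa using hTx.add (tendsto_iff_norm_sub_tendsto_zero.mp hxp))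
    calc ‖(S j)^[n] (ybar n) - p‖
        ≤ ‖(S j)^[n] (ybar n) - x n‖ + ‖x n - p‖ := by
          rw [show (S j)^[n] (ybar n) - p = ((S j)^[n] (ybar n) - x n) + (x n - p) by abel]
          exact norm_add_le _ _
      _ = ‖(S j)^[n] (ybar n) - x n‖ + ‖x n - p‖ := rfl
  -- ‖x n - ybar n‖ → 0
  have hxyb : Filter.Tendsto (fun n => ‖x n - ybar n‖) Filter.atTop (nhds 0) := by
    set B : ℕ → ℝ := fun n => ‖A (iN n) (x n) - A (iN n) u0‖ with hBdef
    set G : ℕ → ℝ := fun n =>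
      (‖x n - ybar n‖ - r n * B n) ^ 2 + r n * (2 * α - r n) * B n ^ 2 with hGdef
    set E : ℕ → ℝ := fun n => k n ^ 2 * ‖x n - u0‖ ^ 2 - ‖zbar n - u0‖ ^ 2 with hEdef
    have hrpos : ∀ n, (0:ℝ) ≤ r n * (2 * α - r n) := by
      intro n; have := hr0 n; have := (hr n).2
      have h2 : (0:ℝ) < 2 * α - r n := by linarith
      positivity
    have hGnn : ∀ n, 0 ≤ G n := fun n =>
      add_nonneg (sq_nonneg _) (mul_nonneg (hrpos n) (sq_nonneg _))
    have hGE : ∀ n, (1 - a n) * G n ≤ E n := by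
      intro n
      have h1 := hzb u0 hu0F n (jM n)
      rw [← hzbar n] at h1
      have h2 : ‖ybar n - u0‖ ^ 2 ≤ ‖x n - u0‖ ^ 2 - G n := by
        have := hres u0 hu0F n (iN n)
        rw [← hybar n] at this
        simp only [hGdef, hBdef]
        linarith
      have hk2 : (1:ℝ) ≤ k n ^ 2 := by nlinarith [hk1 n]
      have e1 : (0:ℝ) ≤ 1 - a n := by linarith [ha1 n]
      have h3 : (k n * ‖ybar n - u0‖) ^ 2 = k n ^ 2 * ‖ybar n - u0‖ ^ 2 := by ring
      rw [h3] at h1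
      have h4 := mul_le_mul_of_nonneg_left h2 (by positivity : (0:ℝ) ≤ k n ^ 2)
      have h5 := mul_le_mul_of_nonneg_left h4 e1
      have h6 : (1 - a n) * G n ≤ (1 - a n) * (k n ^ 2 * G n) := by
        have := mul_le_mul_of_nonneg_left
          (mul_le_mul_of_nonneg_right hk2 (hGnn n)) e1
        calc (1 - a n) * G n = (1 - a n) * (1 * G n) := by ring
          _ ≤ (1 - a n) * (k n ^ 2 * G n) := this
      have h7 : a n * (k n ^ 2 - 1) * ‖x n - u0‖ ^ 2 ≥ 0 :=
        mul_nonneg (mul_nonneg (ha0 n).le (by linarith)) (by positivity)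
      simp only [hEdef]
      nlinarith [h1, h5, h6]
    have hE0 : Filter.Tendsto E Filter.atTop (nhds 0) := by
      have h1 : Filter.Tendsto (fun n => ‖x n - u0‖ ^ 2) Filter.atTop
          (nhds (‖p - u0‖ ^ 2)) := ((hxp.sub tendsto_const_nhds).norm.pow 2)
      have h2 : Filter.Tendsto (fun n => ‖zbar n - u0‖ ^ 2) Filter.atTop
          (nhds (‖p - u0‖ ^ 2)) := ((hzbp.sub tendsto_const_nhds).norm.pow 2)
      have h3 := ((hklim.pow 2).mul h1).sub h2
      norm_num at h3
      exact h3
    have hG0 : Filter.Tendsto G Filter.atTop (nhds 0) := by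
      apply squeeze_zero' (Filter.Eventually.of_forall hGnn)
        (g := fun n => (1 / (1 - q)) * E n) ?_ (by simpa using hE0.const_mul (1/(1-q)))
      filter_upwards [hqa] with n hn
      have h1 := hGE n
      have h2 : (1 - q) * G n ≤ (1 - a n) * G n :=
        mul_le_mul_of_nonneg_right (by linarith) (hGnn n)
      rw [div_mul_eq_mul_div, le_div_iff₀ hq0, one_mul]
      calc G n * (1 - q) = (1 - q) * G n := by ring
        _ ≤ E n := le_trans h2 h1
    -- B n → 0
    have hB2 : Filter.Tendsto (fun n => B n ^ 2) Filter.atTop (nhds 0) := by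
      apply squeeze_zero (fun n => sq_nonneg _)
        (g := fun n => (1 / (d * (2 * α - e))) * G n)
        ?_ (by simpa using hG0.const_mul (1/(d*(2*α - e))))
      intro n
      have hpos : (0:ℝ) < d * (2 * α - e) := mul_pos hd (by linarith)
      have h1 : d * (2 * α - e) ≤ r n * (2 * α - r n) := by
        have h2 := (hr n).1; have h3 := (hr n).2; have h4 := hr0 n
        nlinarith
      have h5 : d * (2 * α - e) * B n ^ 2 ≤ r n * (2 * α - r n) * B n ^ 2 :=
        mul_le_mul_of_nonneg_right h1 (sq_nonneg _)
      have h6 : r n * (2 * α - r n) * B n ^ 2 ≤ G n := by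
        have := sq_nonneg (‖x n - ybar n‖ - r n * B n)
        simp only [hGdef]; linarith
      show B n ^ 2 ≤ 1 / (d * (2 * α - e)) * G n
      rw [div_mul_eq_mul_div, le_div_iff₀ hpos, one_mul]
      calc B n ^ 2 * (d * (2 * α - e)) = d * (2 * α - e) * B n ^ 2 := by ring
        _ ≤ G n := le_trans h5 h6
    have hB : Filter.Tendsto B Filter.atTop (nhds 0) := by
      have := (Real.continuous_sqrt.tendsto 0).comp hB2
      rw [Real.sqrt_zero] at this
      refine this.congr fun n => ?_
      exact Real.sqrt_sq (norm_nonneg _)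
    have hrB : Filter.Tendsto (fun n => r n * B n) Filter.atTop (nhds 0) := by
      apply squeeze_zero (fun n => mul_nonneg (hr0 n).le (norm_nonneg _))
        (g := fun n => e * B n) ?_ (by simpa using hB.const_mul e)
      intro n
      exact mul_le_mul_of_nonneg_right (hr n).2 (norm_nonneg _)
    -- W n → 0
    have hW2 : Filter.Tendsto (fun n => (‖x n - ybar n‖ - r n * B n) ^ 2)
        Filter.atTop (nhds 0) := by
      apply squeeze_zero (fun n => sq_nonneg _) (g := G) ?_ hG0
      intro n
      have := mul_nonneg (hrpos n) (sq_nonneg (B n))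
      simp only [hGdef]; linarith
    have hW : Filter.Tendsto (fun n => ‖x n - ybar n‖ - r n * B n)
        Filter.atTop (nhds 0) := by
      have habs : Filter.Tendsto (fun n => |‖x n - ybar n‖ - r n * B n|)
          Filter.atTop (nhds 0) := by
        have := (Real.continuous_sqrt.tendsto 0).comp hW2
        rw [Real.sqrt_zero] at this
        refine this.congr fun n => ?_
        simp [Real.sqrt_sq_eq_abs]
      apply tendsto_of_tendsto_of_tendsto_of_le_of_le (by simpa using habs.neg) habs
      · intro n; exact neg_abs_le _
      · intro n; exact le_abs_self _
    have := hW.add hrB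
    norm_num at this
    refine this.congr fun n => ?_
    ring
  have hybarp : Filter.Tendsto ybar Filter.atTop (nhds p) := by
    rw [tendsto_iff_norm_sub_tendsto_zero]
    apply squeeze_zero (fun n => norm_nonneg _) (fun n => ?_)
      (by simpa using hxyb.add (tendsto_iff_norm_sub_tendsto_zero.mp hxp))
    calc ‖ybar n - p‖ ≤ ‖ybar n - x n‖ + ‖x n - p‖ := by
          rw [show ybar n - p = (ybar n - x n) + (x n - p) by abel]
          exact norm_add_le _ _
      _ = ‖x n - ybar n‖ + ‖x n - p‖ := by rw [norm_sub_rev]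
  -- y n i → p for each i
  have hyix : ∀ i, Filter.Tendsto (fun n => ‖y n i - x n‖) Filter.atTop (nhds 0) := by
    intro i
    apply squeeze_zero (fun n => norm_nonneg _) (fun n => ?_) hxyb
    calc ‖y n i - x n‖ ≤ ‖y n (iN n) - x n‖ := hiN n i
      _ = ‖x n - ybar n‖ := by rw [hybar n, norm_sub_rev]
  have hyi : ∀ i, Filter.Tendsto (fun n => y n i) Filter.atTop (nhds p) := by
    intro i
    rw [tendsto_iff_norm_sub_tendsto_zero]
    apply squeeze_zero (fun n => norm_nonneg _) (fun n => ?_)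
      (by simpa using (hyix i).add (tendsto_iff_norm_sub_tendsto_zero.mp hxp))
    calc ‖y n i - p‖ ≤ ‖y n i - x n‖ + ‖x n - p‖ := by
          rw [show y n i - p = (y n i - x n) + (x n - p) by abel]
          exact norm_add_le _ _
      _ = ‖y n i - x n‖ + ‖x n - p‖ := rfl
  -- p is a fixed point of each S j
  have hSp : ∀ j, S j p = p := by
    intro j
    set T : ℕ → H := fun n => (S j)^[n] (ybar n) with hTdef
    have hTC : ∀ n, T n ∈ C := fun n => hSit j n (ybar n) (hybarC n)
    have hTp : Filter.Tendsto T Filter.atTop (nhds p) := hSybar j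
    have hkbd : Filter.Tendsto (fun n => k (n+1)) Filter.atTop (nhds 1) :=
      hklim.comp (tendsto_add_atTop_nat 1)
    have hybdiff : Filter.Tendsto (fun n => ‖ybar n - ybar (n+1)‖) Filter.atTop (nhds 0) := by
      have h1 : Filter.Tendsto (fun n => ybar n - ybar (n+1)) Filter.atTop (nhds (p - p)) :=
        hybarp.sub (hybarp.comp (tendsto_add_atTop_nat 1))
      rw [sub_self] at h1
      simpa using h1.norm
    have hT1p : Filter.Tendsto (fun n => ‖T (n+1) - p‖) Filter.atTop (nhds 0) :=
      tendsto_iff_norm_sub_tendsto_zero.mp (hTp.comp (tendsto_add_atTop_nat 1))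
    -- S j (T n) → p
    have h2 : Filter.Tendsto (fun n => S j (T n)) Filter.atTop (nhds p) := by
      rw [tendsto_iff_norm_sub_tendsto_zero]
      apply squeeze_zero (fun n => norm_nonneg _)
        (g := fun n => k (n+1) * ‖ybar n - ybar (n+1)‖ + ‖T (n+1) - p‖) (fun n => ?_)
        (by simpa using (hkbd.mul hybdiff).add hT1p)
      have hST : S j (T n) = (S j)^[n+1] (ybar n) := by
        rw [hTdef]; exact (Function.iterate_succ_apply' (S j) n (ybar n)).symm
      have hasb : ‖(S j)^[n+1] (ybar n) - (S j)^[n+1] (ybar (n+1))‖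
          ≤ k (n+1) * ‖ybar n - ybar (n+1)‖ :=
        hasym j (n+1) (Nat.succ_le_succ (Nat.zero_le n)) (ybar n) (hybarC n)
          (ybar (n+1)) (hybarC (n+1))
      have hT1 : T (n+1) = (S j)^[n+1] (ybar (n+1)) := rfl
      calc ‖S j (T n) - p‖
          ≤ ‖(S j)^[n+1] (ybar n) - (S j)^[n+1] (ybar (n+1))‖ + ‖T (n+1) - p‖ := by
            rw [hST, hT1]
            rw [show (S j)^[n+1] (ybar n) - p
              = ((S j)^[n+1] (ybar n) - (S j)^[n+1] (ybar (n+1)))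
                + ((S j)^[n+1] (ybar (n+1)) - p) by abel]
            exact norm_add_le _ _
        _ ≤ k (n+1) * ‖ybar n - ybar (n+1)‖ + ‖T (n+1) - p‖ := by
            linarith
    -- S j (T n) → S j p
    have h1 : Filter.Tendsto (fun n => S j (T n)) Filter.atTop (nhds (S j p)) := by
      rw [tendsto_iff_norm_sub_tendsto_zero]
      apply squeeze_zero (fun n => norm_nonneg _)
        (g := fun n => k 1 * ‖T n - p‖) (fun n => ?_)
        (by simpa using (tendsto_iff_norm_sub_tendsto_zero.mp hTp).const_mul (k 1))
      have := hasym j 1 le_rfl (T n) (hTC n) p hpC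
      simpa using this
    exact tendsto_nhds_unique h1 h2
  -- p solves each generalized equilibrium problem
  have hpGEP : ∀ i, ∀ w ∈ C, 0 ≤ f i p w + ⟪A i p, w - p⟫ := by
    intro i w hwC
    -- A i is Lipschitz on C
    have hAlip : ∀ v ∈ C, ∀ v' ∈ C, α * ‖A i v - A i v'‖ ≤ ‖v - v'‖ := by
      intro v hv v' hv'
      have h1 := hism i v hv v' hv'
      have h2 := real_inner_le_norm (A i v - A i v') (v - v')
      rcases eq_or_lt_of_le (norm_nonneg (A i v - A i v')) with h3 | h3
      · rw [← h3, mul_zero]; exact norm_nonneg _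
      · nlinarith
    have hAx : Filter.Tendsto (fun n => A i (x n)) Filter.atTop (nhds (A i p)) := by
      rw [tendsto_iff_norm_sub_tendsto_zero]
      apply squeeze_zero (fun n => norm_nonneg _)
        (g := fun n => (1/α) * ‖x n - p‖) (fun n => ?_)
        (by simpa using (tendsto_iff_norm_sub_tendsto_zero.mp hxp).const_mul (1/α))
      have := hAlip (x n) (hxC n) p hpC
      show ‖A i (x n) - A i p‖ ≤ 1/α * ‖x n - p‖
      rw [div_mul_eq_mul_div, le_div_iff₀ hα, one_mul]
      linarith
    -- Step A : ∀ w' ∈ C, f i w' p ≤ ⟪A i p, w' - p⟫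
    have hA : ∀ w' ∈ C, f i w' p ≤ ⟪A i p, w' - p⟫ := by
      intro w' hw'
      have hR1 : Filter.Tendsto (fun n => ⟪A i (x n), w' - y n i⟫) Filter.atTop
          (nhds ⟪A i p, w' - p⟫) :=
        hAx.inner (tendsto_const_nhds.sub (hyi i))
      have hR2 : Filter.Tendsto (fun n => (1 / r n) * ⟪w' - y n i, y n i - x n⟫)
          Filter.atTop (nhds 0) := by
        apply squeeze_zero_norm' (a := fun n => (1/d) * (‖w' - y n i‖ * ‖y n i - x n‖))
        · filter_upwards with n
          have h1 : |⟪w' - y n i, y n i - x n⟫| ≤ ‖w' - y n i‖ * ‖y n i - x n‖ :=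
            abs_real_inner_le_norm _ _
          have h2 : |1 / r n| ≤ 1/d := by
            rw [abs_of_pos (one_div_pos.mpr (hr0 n))]
            apply div_le_div_of_nonneg_left one_pos.le hd (hr n).1
          rw [Real.norm_eq_abs, abs_mul]
          apply mul_le_mul h2 h1 (abs_nonneg _) (by positivity)
        · have h3 : Filter.Tendsto (fun n => ‖w' - y n i‖ * ‖y n i - x n‖)
              Filter.atTop (nhds 0) := by
            have h4 : Filter.Tendsto (fun n => ‖w' - y n i‖) Filter.atTop
                (nhds ‖w' - p‖) := (tendsto_const_nhds.sub (hyi i)).norm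
            simpa using h4.mul (hyix i)
          simpa using h3.const_mul (1/d)
      have hR := hR1.add hR2
      rw [add_zero] at hR
      have hfle : ∀ n, f i w' (y n i)
          ≤ ⟪A i (x n), w' - y n i⟫ + (1 / r n) * ⟪w' - y n i, y n i - x n⟫ := by
        intro n
        have h0 := (hy n i).2 w' hw'
        have h2 := hfA2 i (y n i) (hyC n i) w' hw'
        linarith
      by_contra hcon
      push_neg at hcon
      set c := (⟪A i p, w' - p⟫ + f i w' p) / 2 with hc
      have hc1 : c < f i w' p := by rw [hc]; linarith
      have hev := hfA4lsc i w' hw' p hpC c hc1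
      have hyn : Filter.Tendsto (fun n => y n i) Filter.atTop (nhdsWithin p C) :=
        tendsto_nhdsWithin_of_tendsto_nhds_of_eventually_within _ (hyi i)
          (Filter.Eventually.of_forall fun n => hyC n i)
      have hev2 : ∀ᶠ n in Filter.atTop, c < f i w' (y n i) := hyn.eventually hev
      have hle : c ≤ ⟪A i p, w' - p⟫ :=
        ge_of_tendsto hR (hev2.mono fun n hn => le_trans hn.le (hfle n))
      rw [hc] at hle; linarith
    -- Step B : Minty-type argument using (A1), (A3), (A4)
    set I := ⟪A i p, w - p⟫ with hI
    set wt : ℝ → H := fun t => t • w + (1 - t) • p with hwt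
    have hwtC : ∀ t : ℝ, 0 ≤ t → t ≤ 1 → wt t ∈ C := by
      intro t h0 h1
      exact hCcv hwC hpC h0 (by linarith) (by ring)
    have hwtp : ∀ t : ℝ, ⟪A i p, wt t - p⟫ = t * I := by
      intro t
      have : wt t - p = t • (w - p) := by simp only [hwt]; module
      rw [this, real_inner_smul_right, hI]
    have hlow : ∀ t : ℝ, 0 < t → t < 1 → -(1 - t) * I ≤ f i (wt t) w := by
      intro t h0 h1
      have hwtC' := hwtC t h0.le h1.le
      have hA' : f i (wt t) p ≤ t * I := by
        have := hA (wt t) hwtC'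
        rwa [hwtp t] at this
      have hcvx := (hfA4conv i (wt t) hwtC').2 hwC hpC h0.le
        (show (0:ℝ) ≤ 1 - t by linarith) (show t + (1 - t) = 1 by ring)
      simp only [smul_eq_mul] at hcvx
      have h4 : f i (wt t) (t • w + (1 - t) • p) = 0 := hfA1 i (wt t) hwtC'
      rw [show (t • w + (1 - t) • p) = wt t from rfl] at h4
      -- 0 ≤ t * f i (wt t) w + (1 - t) * (t * I)
      have h5 : 0 ≤ t * f i (wt t) w + (1 - t) * (t * I) := by
        have h6 : (0:ℝ) ≤ 1 - t := by linarith
        have h7 := mul_le_mul_of_nonneg_left hA' h6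
        rw [h4] at hcvx
        linarith
      nlinarith
    have hup : ∀ t : ℝ, 0 < t → t < 1 →
        f i (wt t) w ≤ |f i w p| - 2 * f i w (wt (1/2)) := by
      intro t h0 h1
      have hwtC' := hwtC t h0.le h1.le
      have hwtC'' := hwtC (1 - t) (by linarith) (by linarith)
      have h5 : f i (wt t) w ≤ -f i w (wt t) := by
        have := hfA2 i (wt t) hwtC' w hwC
        linarith
      have hcomb : wt (1/2) = (1/2 : ℝ) • wt t + (1/2 : ℝ) • wt (1 - t) := by
        simp only [hwt]; module
      have h6 : f i w (wt (1/2)) ≤ 1/2 * f i w (wt t) + 1/2 * f i w (wt (1 - t)) := by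
        have := (hfA4conv i w hwC).2 hwtC' hwtC'' (by norm_num : (0:ℝ) ≤ 1/2)
          (by norm_num : (0:ℝ) ≤ 1/2) (show (1:ℝ)/2 + 1/2 = 1 by norm_num)
        simp only [smul_eq_mul] at this
        rw [← hcomb] at this
        exact this
      have h7 : f i w (wt (1 - t)) ≤ (1 - t) * f i w w + t * f i w p := by
        have := (hfA4conv i w hwC).2 hwC hpC (by linarith : (0:ℝ) ≤ 1 - t)
          (by linarith : (0:ℝ) ≤ t) (show (1 - t) + t = 1 by ring)
        simp only [smul_eq_mul] at this
        rw [show (1 - t) • w + t • p = wt (1 - t) from by simp only [hwt]; module] at this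
        exact this
      have h8 : f i w w = 0 := hfA1 i w hwC
      rw [h8, mul_zero, zero_add] at h7
      have h9 : t * f i w p ≤ |f i w p| := by
        nlinarith [le_abs_self (f i w p), neg_abs_le (f i w p), abs_nonneg (f i w p)]
      linarith
    -- limsup bound
    set g : ℝ → ℝ := fun t => f i (t • w + (1 - t) • p) w with hg
    have hgwt : ∀ t, g t = f i (wt t) w := fun t => rfl
    have hbmem : Set.Ioo (0:ℝ) 1 ∈ nhdsWithin (0:ℝ) (Set.Ioi 0) :=
      Ioo_mem_nhdsGT_of_mem ⟨le_rfl, by norm_num⟩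
    have hbdd : Filter.IsBoundedUnder (· ≤ ·) (nhdsWithin (0:ℝ) (Set.Ioi 0)) g := by
      refine ⟨|f i w p| - 2 * f i w (wt (1/2)), Filter.eventually_map.2 ?_⟩
      filter_upwards [hbmem] with t ht
      rw [hgwt]
      exact hup t ht.1 ht.2
    have hlimsup := hfA3 i p hpC w hwC w hwC
    have hdel : ∀ δ : ℝ, 0 < δ → δ < 1 → -I - δ * |I| ≤ f i p w := by
      intro δ hδ0 hδ1
      have hmem2 : Set.Ioo (0:ℝ) δ ∈ nhdsWithin (0:ℝ) (Set.Ioi 0) :=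
        Ioo_mem_nhdsGT_of_mem ⟨le_rfl, hδ0⟩
      have hev : ∀ᶠ t in nhdsWithin (0:ℝ) (Set.Ioi 0), -I - δ * |I| ≤ g t := by
        filter_upwards [hbmem, hmem2] with t ht htδ
        rw [hgwt]
        have h1 := hlow t ht.1 ht.2
        have h2 : -(t * |I|) ≤ t * I := by
          nlinarith [neg_abs_le I, ht.1.le]
        have h3 : t * |I| ≤ δ * |I| :=
          mul_le_mul_of_nonneg_right htδ.2.le (abs_nonneg I)
        nlinarith
      calc -I - δ * |I| ≤ Filter.limsup g (nhdsWithin (0:ℝ) (Set.Ioi 0)) :=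
            Filter.le_limsup_of_frequently_le hev.frequently hbdd
        _ ≤ f i p w := hlimsup
    have hfinal : -I ≤ f i p w := by
      by_contra hcon2
      push_neg at hcon2
      set δ := min (1/2) ((-I - f i p w) / (2 * (|I| + 1))) with hδ
      have hnum : 0 < -I - f i p w := by linarith
      have hδ0 : 0 < δ := lt_min (by norm_num) (by positivity)
      have hδ1 : δ < 1 := lt_of_le_of_lt (min_le_left _ _) (by norm_num)
      have h1 := hdel δ hδ0 hδ1
      have h2 : δ ≤ (-I - f i p w) / (2 * (|I| + 1)) := min_le_right _ _
      have h3 : δ * |I| ≤ ((-I - f i p w) / (2 * (|I| + 1))) * |I| :=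
        mul_le_mul_of_nonneg_right h2 (abs_nonneg I)
      have h4 : ((-I - f i p w) / (2 * (|I| + 1))) * |I| < (-I - f i p w) / 2 := by
        rw [div_mul_eq_mul_div, div_lt_div_iff₀ (by positivity) (by norm_num)]
        nlinarith [abs_nonneg I]
      linarith
    linarith
  have hpF : p ∈ F := by
    rw [hF]; exact ⟨⟨hpC, hpGEP⟩, hSp⟩
  -- minimality of p
  have hmin : ∀ v ∈ F, ‖p - x 0‖ ≤ ‖v - x 0‖ := by
    intro v hv
    have hev : ∀ᶠ n in Filter.atTop, ‖x n - x 0‖ ≤ ‖v - x 0‖ := by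
      filter_upwards [Filter.eventually_ge_atTop 1] with n hn
      cases n with
      | zero => exact absurd hn (by omega)
      | succ m => exact (hxproj m).2 v (hFsub (m+1) hv)
    have hlim : Filter.Tendsto (fun n => ‖x n - x 0‖) Filter.atTop (nhds ‖p - x 0‖) :=
      (hxp.sub tendsto_const_nhds).norm
    exact le_of_tendsto hlim hev
  exact ⟨p, ⟨hpF, hmin⟩, hxp⟩
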